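/- Suppose that for each u ∈ U the map x ↦ f(x,u) is globally L-Lipschitz on ℝⁿ. Fix τ > 0, α ≥ 0, ε > 0, an initial state x₀ ∈ ℝⁿ, and sequences (x_i), (q_i) in ℝⁿ and (u_i) in 𝒰 such that ‖x_i − q_i‖ ≤ ε e^{−((i+1)α + L)τ} and x_{i+1} = ξ(x_i, u_i, τ) for all i ∈ ℕ, with x₀ given. Define û : [0,∞) → U by û(t) := u_i(t − iτ) for i = ⌊t/τ⌋, and ξ̂ : [0,∞) → ℝⁿ by ξ̂(t) := ξ(q_i, u_i, t − iτ) for i = ⌊t/τ⌋. Then for every i ∈ ℕ, x_{i+1} ∈ B(ξ(q_i, u_i, τ), ε e^{−(i+1)ατ}), and for every t ≥ 0, ‖ξ̂(t) − ξ(x₀, û, t)‖ ≤ ε e^{−αt}. -/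

import Mathlib

open Set Filter MeasureTheory Metric

noncomputable section

/-- The state space `ℝⁿ`. -/
abbrev Stat (n : ℕ) : Type := EuclideanSpace ℝ (Fin n)

/-- Control signals: functions of time with values in `ℝᵐ`. -/
abbrev CtrlSig (m : ℕ) : Type := ℝ → EuclideanSpace ℝ (Fin m)

variable {n m : ℕ}

/-- `N_ε(Q) = {y | ∃ x ∈ Q, ‖x - y‖ ≤ ε}`. -/
def nbhd (Q : Set (Stat n)) (ε : ℝ) : Set (Stat n) := {y | ∃ x ∈ Q, ‖x - y‖ ≤ ε}

/-- `ξ` is the solution map of `ẋ(t) = f(x(t), u(t))`. -/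
def IsSolution (f : Stat n → EuclideanSpace ℝ (Fin m) → Stat n)
    (𝒰 : Set (CtrlSig m)) (ξ : Stat n → CtrlSig m → ℝ → Stat n) : Prop :=
  ∀ x : Stat n, ∀ u ∈ 𝒰, ξ x u 0 = x ∧
    ∀ t : ℝ, 0 ≤ t → HasDerivAt (ξ x u) (f (ξ x u t) (u t)) t

/-- Admissible control signals take values in the compact control-value set `U`. -/
def CtrlValued (𝒰 : Set (CtrlSig m)) (U : Set (EuclideanSpace ℝ (Fin m))) : Prop :=
  ∀ u ∈ 𝒰, ∀ t : ℝ, u t ∈ U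

/-- The trajectory `ξ(x,u,·)` is `(T,ε,τ,Q)`-recurrent. -/
def IsRecTraj (ξ : Stat n → CtrlSig m → ℝ → Stat n) (Q : Set (Stat n))
    (T ε τ : ℝ) (x : Stat n) (u : CtrlSig m) : Prop :=
  ∀ t : ℝ, 0 ≤ t → t ≤ T - τ → ∃ t', t ≤ t' ∧ t' ≤ t + τ ∧ ξ x u t' ∈ nbhd Q ε

/-- The trajectory `ξ(x,u,·)` is `(T,τ,Q)`-recurrent (strict case, `ε = 0`). -/
def IsRecTrajS (ξ : Stat n → CtrlSig m → ℝ → Stat n) (Q : Set (Stat n))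
    (T τ : ℝ) (x : Stat n) (u : CtrlSig m) : Prop :=
  ∀ t : ℝ, 0 ≤ t → t ≤ T - τ → ∃ t', t ≤ t' ∧ t' ≤ t + τ ∧ ξ x u t' ∈ Q

/-- The trajectory `ξ(x,u,·)` is `(τ,Q)`-recurrent (`T = ∞`, `ε = 0`). -/
def IsRecTrajInf (ξ : Stat n → CtrlSig m → ℝ → Stat n) (Q : Set (Stat n))
    (τ : ℝ) (x : Stat n) (u : CtrlSig m) : Prop :=
  ∀ t : ℝ, 0 ≤ t → ∃ t', t ≤ t' ∧ t' ≤ t + τ ∧ ξ x u t' ∈ Q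

/-- The trajectory `ξ(x,u,·)` is `(T,ε,Q')`-invariant. -/
def IsInvTraj (ξ : Stat n → CtrlSig m → ℝ → Stat n) (Q' : Set (Stat n))
    (T ε : ℝ) (x : Stat n) (u : CtrlSig m) : Prop :=
  ∀ t : ℝ, 0 ≤ t → t ≤ T → ξ x u t ∈ nbhd Q' ε

/-- The trajectory `ξ(x,u,·)` is `(T,Q')`-invariant (strict case, `ε = 0`). -/
def IsInvTrajS (ξ : Stat n → CtrlSig m → ℝ → Stat n) (Q' : Set (Stat n))
    (T : ℝ) (x : Stat n) (u : CtrlSig m) : Prop :=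
  ∀ t : ℝ, 0 ≤ t → t ≤ T → ξ x u t ∈ Q'

/-- `Q` is controlled `τ`-recurrent. -/
def CtrlTauRec (ξ : Stat n → CtrlSig m → ℝ → Stat n) (𝒰 : Set (CtrlSig m))
    (Q : Set (Stat n)) (τ : ℝ) : Prop :=
  ∀ x ∈ Q, ∃ u ∈ 𝒰, IsRecTrajInf ξ Q τ x u

/-- `Q` is controlled invariant. -/
def CtrlInv (ξ : Stat n → CtrlSig m → ℝ → Stat n) (𝒰 : Set (CtrlSig m))
    (Q : Set (Stat n)) : Prop :=
  ∀ x ∈ Q, ∃ u ∈ 𝒰, ∀ t : ℝ, 0 ≤ t → ξ x u t ∈ Q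

/-- `τ`-completeness: solutions from `Q` are defined on `[0,τ]` (automatic here) and
continuous in the initial state. -/
def TauComplete (ξ : Stat n → CtrlSig m → ℝ → Stat n) (𝒰 : Set (CtrlSig m))
    (Q : Set (Stat n)) (τ : ℝ) : Prop :=
  ∀ u ∈ 𝒰, ∀ t ∈ Icc (0:ℝ) τ, ContinuousOn (fun x => ξ x u t) Q

/-- `S` is a recurrence `(T,ε,τ,Q)`-spanning set. -/
def RecSpanning (ξ : Stat n → CtrlSig m → ℝ → Stat n) (𝒰 : Set (CtrlSig m))
    (Q : Set (Stat n)) (T ε τ : ℝ) (S : Set (CtrlSig m)) : Prop :=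
  S ⊆ 𝒰 ∧ ∀ x ∈ Q, ∃ u ∈ S, IsRecTraj ξ Q T ε τ x u

/-- `S` is a recurrence `(T,τ,Q)`-spanning set (strict case). -/
def RecSpanningS (ξ : Stat n → CtrlSig m → ℝ → Stat n) (𝒰 : Set (CtrlSig m))
    (Q : Set (Stat n)) (T τ : ℝ) (S : Set (CtrlSig m)) : Prop :=
  S ⊆ 𝒰 ∧ ∀ x ∈ Q, ∃ u ∈ S, IsRecTrajS ξ Q T τ x u

/-- `S` is an invariance `(T,ε,K,Q')`-spanning set. -/
def InvSpanning (ξ : Stat n → CtrlSig m → ℝ → Stat n) (𝒰 : Set (CtrlSig m))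
    (K Q' : Set (Stat n)) (T ε : ℝ) (S : Set (CtrlSig m)) : Prop :=
  S ⊆ 𝒰 ∧ ∀ x ∈ K, ∃ u ∈ S, IsInvTraj ξ Q' T ε x u

/-- `S` is an invariance `(T,K,Q')`-spanning set (strict case). -/
def InvSpanningS (ξ : Stat n → CtrlSig m → ℝ → Stat n) (𝒰 : Set (CtrlSig m))
    (K Q' : Set (Stat n)) (T : ℝ) (S : Set (CtrlSig m)) : Prop :=
  S ⊆ 𝒰 ∧ ∀ x ∈ K, ∃ u ∈ S, IsInvTrajS ξ Q' T x u

/-- `r_rec(T,ε,τ,Q)`: minimal cardinality of a recurrence spanning set (`⊤` if none). -/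
def rRec (ξ : Stat n → CtrlSig m → ℝ → Stat n) (𝒰 : Set (CtrlSig m))
    (Q : Set (Stat n)) (T ε τ : ℝ) : ℕ∞ :=
  sInf (Set.encard '' {S | RecSpanning ξ 𝒰 Q T ε τ S})

/-- `r*_rec(T,τ,Q)`. -/
def rRecS (ξ : Stat n → CtrlSig m → ℝ → Stat n) (𝒰 : Set (CtrlSig m))
    (Q : Set (Stat n)) (T τ : ℝ) : ℕ∞ :=
  sInf (Set.encard '' {S | RecSpanningS ξ 𝒰 Q T τ S})

/-- `r_inv(T,ε,K,Q')`. -/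
def rInv (ξ : Stat n → CtrlSig m → ℝ → Stat n) (𝒰 : Set (CtrlSig m))
    (K Q' : Set (Stat n)) (T ε : ℝ) : ℕ∞ :=
  sInf (Set.encard '' {S | InvSpanning ξ 𝒰 K Q' T ε S})

/-- `r*_inv(T,K,Q')`. -/
def rInvS (ξ : Stat n → CtrlSig m → ℝ → Stat n) (𝒰 : Set (CtrlSig m))
    (K Q' : Set (Stat n)) (T : ℝ) : ℕ∞ :=
  sInf (Set.encard '' {S | InvSpanningS ξ 𝒰 K Q' T S})

/-- Extended-real base-2 logarithm of an extended natural number. -/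
def elog2 (c : ℕ∞) : EReal :=
  if c = ⊤ then (⊤ : EReal) else ((Real.logb 2 (c.toNat : ℝ) : ℝ) : EReal)

/-- `limsup_{T→∞} (1/T) log₂ r(T)` as an extended real. -/
def entLimsup (r : ℝ → ℕ∞) : EReal :=
  Filter.limsup (fun T : ℝ => ((T⁻¹ : ℝ) : EReal) * elog2 (r T)) Filter.atTop

/-- The `τ`-recurrence entropy `h_rec(τ,Q)`; the limit as `ε ↘ 0` is realized as the
supremum over `ε > 0` since the quantity is monotone as `ε` decreases. -/
def hRec (ξ : Stat n → CtrlSig m → ℝ → Stat n) (𝒰 : Set (CtrlSig m))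
    (Q : Set (Stat n)) (τ : ℝ) : EReal :=
  ⨆ ε : Ioi (0:ℝ), entLimsup (fun T => rRec ξ 𝒰 Q T (ε : ℝ) τ)

/-- The strict `τ`-recurrence entropy `h*_rec(τ,Q)`. -/
def hRecS (ξ : Stat n → CtrlSig m → ℝ → Stat n) (𝒰 : Set (CtrlSig m))
    (Q : Set (Stat n)) (τ : ℝ) : EReal :=
  entLimsup (fun T => rRecS ξ 𝒰 Q T τ)

/-- The invariance entropy `h_inv(K,Q')`. -/
def hInv (ξ : Stat n → CtrlSig m → ℝ → Stat n) (𝒰 : Set (CtrlSig m))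
    (K Q' : Set (Stat n)) : EReal :=
  ⨆ ε : Ioi (0:ℝ), entLimsup (fun T => rInv ξ 𝒰 K Q' T (ε : ℝ))

/-- The strict invariance entropy `h*_inv(K,Q')`. -/
def hInvS (ξ : Stat n → CtrlSig m → ℝ → Stat n) (𝒰 : Set (CtrlSig m))
    (K Q' : Set (Stat n)) : EReal :=
  entLimsup (fun T => rInvS ξ 𝒰 K Q' T)

/-- `𝒰_r`: controls that make some trajectory from `Q` `(τ,Q)`-recurrent. -/
def UrSet (ξ : Stat n → CtrlSig m → ℝ → Stat n) (𝒰 : Set (CtrlSig m))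
    (Q : Set (Stat n)) (τ : ℝ) : Set (CtrlSig m) :=
  {u ∈ 𝒰 | ∃ x ∈ Q, IsRecTrajInf ξ Q τ x u}

/-- `R_r(Q,τ)`: reachable set within time `τ` under controls in `𝒰_r`. -/
def RrSet (ξ : Stat n → CtrlSig m → ℝ → Stat n) (𝒰 : Set (CtrlSig m))
    (Q : Set (Stat n)) (τ : ℝ) : Set (Stat n) :=
  {y | ∃ u ∈ UrSet ξ 𝒰 Q τ, ∃ x ∈ Q, ∃ t ∈ Icc (0:ℝ) τ, ξ x u t = y}

/-- Set of Lipschitz difference quotients of `f` over `D × U`. -/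
def lipRatios (f : Stat n → EuclideanSpace ℝ (Fin m) → Stat n)
    (U : Set (EuclideanSpace ℝ (Fin m))) (D : Set (Stat n)) : Set ℝ :=
  {r | ∃ x₁ ∈ D, ∃ x₂ ∈ D, ∃ u ∈ U, x₁ ≠ x₂ ∧ r = ‖f x₁ u - f x₂ u‖ / ‖x₁ - x₂‖}

/-- `L_τ`: max of the Lipschitz ratios over `cl(co(R_r(Q,τ))) × U`. -/
def Ltau (f : Stat n → EuclideanSpace ℝ (Fin m) → Stat n)
    (U : Set (EuclideanSpace ℝ (Fin m))) (ξ : Stat n → CtrlSig m → ℝ → Stat n)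
    (𝒰 : Set (CtrlSig m)) (Q : Set (Stat n)) (τ : ℝ) : ℝ :=
  sSup (lipRatios f U (closure (convexHull ℝ (RrSet ξ 𝒰 Q τ))))

/-- Values `‖f(x,u)‖` over `Q × U`. -/
def normVals (f : Stat n → EuclideanSpace ℝ (Fin m) → Stat n)
    (U : Set (EuclideanSpace ℝ (Fin m))) (Q : Set (Stat n)) : Set ℝ :=
  {r | ∃ x ∈ Q, ∃ u ∈ U, r = ‖f x u‖}

/-- `F_Q := sup_{x∈Q, u∈U} ‖f(x,u)‖`. -/
def FQbound (f : Stat n → EuclideanSpace ℝ (Fin m) → Stat n)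
    (U : Set (EuclideanSpace ℝ (Fin m))) (Q : Set (Stat n)) : ℝ :=
  sSup (normVals f U Q)

/-- `δ_τ := F_Q τ e^{L_τ τ}`. -/
def deltaTau (f : Stat n → EuclideanSpace ℝ (Fin m) → Stat n)
    (U : Set (EuclideanSpace ℝ (Fin m))) (ξ : Stat n → CtrlSig m → ℝ → Stat n)
    (𝒰 : Set (CtrlSig m)) (Q : Set (Stat n)) (τ : ℝ) : ℝ :=
  FQbound f U Q * τ * Real.exp (Ltau f U ξ 𝒰 Q τ * τ)

/-- `b(δ,Q)`: minimal cardinality of a `δ`-cover of `Q` by closed balls. -/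
def coverNum (Q : Set (Stat n)) (δ : ℝ) : ℕ∞ :=
  sInf (Set.encard '' {C : Set (Stat n) | C.Finite ∧ Q ⊆ ⋃ c ∈ C, Metric.closedBall c δ})

/-- `div_x f(x,u) = tr ∂f/∂x(x,u)`. -/
def divf (f : Stat n → EuclideanSpace ℝ (Fin m) → Stat n)
    (x : Stat n) (u : EuclideanSpace ℝ (Fin m)) : ℝ :=
  ∑ i : Fin n, fderiv ℝ (fun y => f y u) x (EuclideanSpace.single i (1:ℝ)) i

/-- Extended-real natural logarithm of an extended natural number. -/
def eln (c : ℕ∞) : EReal :=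
  if c = ⊤ then (⊤ : EReal) else ((Real.log (c.toNat : ℝ) : ℝ) : EReal)

/-- Fractal (box-counting) dimension `dim_F(Q) = limsup_{δ↘0} ln b(δ,Q) / ln(1/δ)`. -/
def dimF (Q : Set (Stat n)) : EReal :=
  Filter.limsup (fun δ : ℝ => eln (coverNum Q δ) * (((Real.log (1/δ))⁻¹ : ℝ) : EReal))
    (nhdsWithin 0 (Ioi 0))

end

noncomputable section

/-- Concatenation of the controls `u_i` over consecutive intervals `[iτ,(i+1)τ)`:
`û(t) = u_{⌊t/τ⌋}(t - ⌊t/τ⌋ τ)`. -/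
def concatCtrl {m : ℕ} (τ : ℝ) (u : ℕ → CtrlSig m) : CtrlSig m :=
  fun t => u (⌊t / τ⌋).toNat (t - ((⌊t / τ⌋).toNat : ℝ) * τ)

/-- The simulated piecewise trajectory `ξ̂(t) = ξ(q_{⌊t/τ⌋}, u_{⌊t/τ⌋}, t - ⌊t/τ⌋ τ)`. -/
def concatTraj {n m : ℕ} (ξ : Stat n → CtrlSig m → ℝ → Stat n) (τ : ℝ)
    (q : ℕ → Stat n) (u : ℕ → CtrlSig m) : ℝ → Stat n :=
  fun t => ξ (q (⌊t / τ⌋).toNat) (u (⌊t / τ⌋).toNat) (t - ((⌊t / τ⌋).toNat : ℝ) * τ)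

/-- **Accuracy invariant of the quantized-sensing algorithm.** If the quantization error
satisfies `‖x_i − q_i‖ ≤ ε e^{−((i+1)α+L)τ}` and `x_{i+1} = ξ(x_i,u_i,τ)`, then
`x_{i+1} ∈ B(ξ(q_i,u_i,τ), ε e^{−(i+1)ατ})` for every `i`, and
`‖ξ̂(t) − ξ(x₀,û,t)‖ ≤ ε e^{−αt}` for every `t ≥ 0`. -/
theorem algorithm_accuracy_invariant {n m : ℕ}
    (f : Stat n → EuclideanSpace ℝ (Fin m) → Stat n)
    (U : Set (EuclideanSpace ℝ (Fin m)))
    (𝒰 : Set (CtrlSig m)) (ξ : Stat n → CtrlSig m → ℝ → Stat n)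
    (hval : CtrlValued 𝒰 U) (hsol : IsSolution f 𝒰 ξ)
    (L : NNReal) (hLip : ∀ v ∈ U, LipschitzWith L (fun x => f x v))
    (τ α ε : ℝ) (hτ : 0 < τ) (hα : 0 ≤ α) (hε : 0 < ε)
    (x₀ : Stat n) (x q : ℕ → Stat n) (u : ℕ → CtrlSig m)
    (hu : ∀ i : ℕ, u i ∈ 𝒰) (huhat : concatCtrl τ u ∈ 𝒰)
    (hx0 : x 0 = x₀)
    (hquant : ∀ i : ℕ, ‖x i - q i‖ ≤ ε * Real.exp (-((((i : ℝ) + 1) * α + (L : ℝ)) * τ)))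
    (hstep : ∀ i : ℕ, x (i + 1) = ξ (x i) (u i) τ) :
    (∀ i : ℕ, x (i + 1) ∈
        Metric.closedBall (ξ (q i) (u i) τ) (ε * Real.exp (-(((i : ℝ) + 1) * α * τ)))) ∧
    ∀ t : ℝ, 0 ≤ t →
      ‖concatTraj ξ τ q u t - ξ x₀ (concatCtrl τ u) t‖ ≤ ε * Real.exp (-(α * t)) := by
  -- Grönwall: continuity of trajectories in the initial condition
  have lemA : ∀ u' ∈ 𝒰, ∀ a b : Stat n, ∀ t : ℝ, 0 ≤ t →
      ‖ξ a u' t - ξ b u' t‖ ≤ ‖a - b‖ * Real.exp ((L : ℝ) * t) := by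
    intro u' hu' a b t ht
    have hv : ∀ s : ℝ, LipschitzWith L (fun x => f x (u' s)) :=
      fun s => hLip _ (hval u' hu' s)
    have hfa := hsol a u' hu'
    have hfb := hsol b u' hu'
    have key := dist_le_of_trajectories_ODE (v := fun s x => f x (u' s)) (K := L)
      (f := ξ a u') (g := ξ b u') (a := 0) (b := t) (δ := dist a b) hv
      (fun s hs => ((hfa.2 s hs.1).continuousAt).continuousWithinAt)
      (fun s hs => (hfa.2 s hs.1).hasDerivWithinAt)
      (fun s hs => ((hfb.2 s hs.1).continuousAt).continuousWithinAt)
      (fun s hs => (hfb.2 s hs.1).hasDerivWithinAt)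
      (by rw [hfa.1, hfb.1])
    have := key t ⟨ht, le_refl t⟩
    rw [dist_eq_norm, dist_eq_norm] at this
    simpa using this
  set uhat := concatCtrl τ u with huhatdef
  -- the floor index of iτ + s equals i for s ∈ [0, τ)
  have hfloor : ∀ (i : ℕ) (s : ℝ), 0 ≤ s → s < τ →
      (⌊((i : ℝ) * τ + s) / τ⌋).toNat = i := by
    intro i s hs0 hsτ
    have h1 : ((i : ℝ) * τ + s) / τ = (i : ℝ) + s / τ := by
      field_simp
    have h2 : ⌊((i : ℝ) * τ + s) / τ⌋ = (i : ℤ) := by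
      rw [h1]
      rw [Int.floor_eq_iff]
      constructor
      · push_cast; nlinarith [div_nonneg hs0 hτ.le]
      · push_cast
        have : s / τ < 1 := (div_lt_one hτ).2 hsτ
        linarith
    rw [h2]; simp
  -- the concatenated control agrees with u i on [iτ, (i+1)τ)
  have huhateq : ∀ (i : ℕ) (s : ℝ), 0 ≤ s → s < τ →
      uhat ((i : ℝ) * τ + s) = u i s := by
    intro i s hs0 hsτ
    show concatCtrl τ u ((i : ℝ) * τ + s) = u i s
    unfold concatCtrl
    rw [hfloor i s hs0 hsτ]
    ring_nf
  -- matching lemma: the concatenated trajectory restarts from its value at iτ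
  have lemB : ∀ (i : ℕ) (s : ℝ), s ∈ Icc (0 : ℝ) τ →
      ξ x₀ uhat ((i : ℝ) * τ + s) = ξ (ξ x₀ uhat ((i : ℝ) * τ)) (u i) s := by
    intro i s hs
    have hiτ : (0 : ℝ) ≤ (i : ℝ) * τ := by positivity
    have huhat := hsol x₀ uhat huhat
    have hui := hsol (ξ x₀ uhat ((i : ℝ) * τ)) (u i) (hu i)
    have hv : ∀ s : ℝ, LipschitzWith L (fun x => f x (u i s)) :=
      fun s => hLip _ (hval (u i) (hu i) s)
    have hF : ∀ r : ℝ, 0 ≤ r → HasDerivAt (fun r => ξ x₀ uhat ((i : ℝ) * τ + r))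
        (f (ξ x₀ uhat ((i : ℝ) * τ + r)) (uhat ((i : ℝ) * τ + r))) r := by
      intro r hr
      exact (huhat.2 ((i : ℝ) * τ + r) (by linarith)).comp_const_add _ _
    have key := ODE_solution_unique_of_mem_Icc_right (v := fun s x => f x (u i s))
      (s := fun _ => (univ : Set (Stat n))) (K := L)
      (f := fun r => ξ x₀ uhat ((i : ℝ) * τ + r)) (g := ξ (ξ x₀ uhat ((i : ℝ) * τ)) (u i))
      (a := 0) (b := τ)
      (fun s _ => (hv s).lipschitzOnWith)
      (fun r hr => ((hF r hr.1).continuousAt).continuousWithinAt)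
      (fun r hr => by
        have := (hF r hr.1).hasDerivWithinAt (s := Ici r)
        rwa [huhateq i r hr.1 hr.2] at this)
      (fun _ _ => mem_univ _)
      (fun r hr => ((hui.2 r hr.1).continuousAt).continuousWithinAt)
      (fun r hr => (hui.2 r hr.1).hasDerivWithinAt)
      (fun _ _ => mem_univ _)
      (by simp [hui.1])
    exact key hs
  -- x i equals the concatenated trajectory at time iτ
  have hxi : ∀ i : ℕ, ξ x₀ uhat ((i : ℝ) * τ) = x i := by
    intro i
    induction i with
    | zero => simp [(hsol x₀ uhat huhat).1, hx0]
    | succ i ih =>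
      have h1 : ((i : ℝ) + 1) * τ = (i : ℝ) * τ + τ := by ring
      have := lemB i τ ⟨hτ.le, le_refl τ⟩
      rw [ih] at this
      rw [hstep i, show (((i + 1 : ℕ) : ℝ)) = (i : ℝ) + 1 by push_cast; ring, h1, this]
  constructor
  · -- part 1
    intro i
    rw [Metric.mem_closedBall, dist_eq_norm, hstep i]
    calc ‖ξ (x i) (u i) τ - ξ (q i) (u i) τ‖
        ≤ ‖x i - q i‖ * Real.exp ((L : ℝ) * τ) := lemA (u i) (hu i) _ _ τ hτ.le
      _ ≤ ε * Real.exp (-((((i : ℝ) + 1) * α + (L : ℝ)) * τ)) * Real.exp ((L : ℝ) * τ) := by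
          apply mul_le_mul_of_nonneg_right (hquant i) (Real.exp_nonneg _)
      _ = ε * Real.exp (-(((i : ℝ) + 1) * α * τ)) := by
          rw [mul_assoc, ← Real.exp_add]; ring_nf
  · -- part 2
    intro t ht
    set i := (⌊t / τ⌋).toNat with hi
    have hfl0 : (0 : ℤ) ≤ ⌊t / τ⌋ := Int.floor_nonneg.2 (div_nonneg ht hτ.le)
    have hic : ((i : ℤ) : ℝ) = ((⌊t / τ⌋ : ℤ) : ℝ) := by
      rw [hi, Int.toNat_of_nonneg hfl0]
    have hlo : (i : ℝ) * τ ≤ t := by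
      have h1 : ((⌊t / τ⌋ : ℤ) : ℝ) ≤ t / τ := Int.floor_le _
      have : (i : ℝ) ≤ t / τ := by rw [show ((i : ℕ) : ℝ) = ((i : ℤ) : ℝ) by push_cast; ring, hic]; exact h1
      calc (i : ℝ) * τ ≤ (t / τ) * τ := by nlinarith
        _ = t := by field_simp
    have hhi : t < ((i : ℝ) + 1) * τ := by
      have h1 : t / τ < ((⌊t / τ⌋ : ℤ) : ℝ) + 1 := Int.lt_floor_add_one _
      have h2 : t / τ < (i : ℝ) + 1 := by
        rw [show ((i : ℕ) : ℝ) = ((i : ℤ) : ℝ) by push_cast; ring, hic]; exact h1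
      calc t = (t / τ) * τ := by field_simp
        _ < ((i : ℝ) + 1) * τ := by nlinarith [div_nonneg ht hτ.le]
    set s := t - (i : ℝ) * τ with hs
    have hs0 : 0 ≤ s := by linarith
    have hsτ : s < τ := by linarith
    have hts : t = (i : ℝ) * τ + s := by ring
    have htraj : concatTraj ξ τ q u t = ξ (q i) (u i) s := by
      unfold concatTraj
      rw [← hi, hs]
    have hsol2 : ξ x₀ uhat t = ξ (x i) (u i) s := by
      rw [hts, lemB i s ⟨hs0, hsτ.le⟩, hxi i]
    rw [htraj, hsol2]
    calc ‖ξ (q i) (u i) s - ξ (x i) (u i) s‖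
        ≤ ‖q i - x i‖ * Real.exp ((L : ℝ) * s) := lemA (u i) (hu i) _ _ s hs0
      _ = ‖x i - q i‖ * Real.exp ((L : ℝ) * s) := by rw [norm_sub_rev]
      _ ≤ ε * Real.exp (-((((i : ℝ) + 1) * α + (L : ℝ)) * τ)) * Real.exp ((L : ℝ) * s) :=
          mul_le_mul_of_nonneg_right (hquant i) (Real.exp_nonneg _)
      _ = ε * Real.exp (-((((i : ℝ) + 1) * α + (L : ℝ)) * τ) + (L : ℝ) * s) := by
          rw [mul_assoc, ← Real.exp_add]
      _ ≤ ε * Real.exp (-(α * t)) := by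
          apply mul_le_mul_of_nonneg_left _ hε.le
          apply Real.exp_le_exp.2
          have hL : (0 : ℝ) ≤ (L : ℝ) := L.2
          have h1 : (L : ℝ) * s ≤ (L : ℝ) * τ := by nlinarith
          have h2 : α * t ≤ ((i : ℝ) + 1) * α * τ := by nlinarith
          nlinarith

end
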